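/- Let B be ℂ³ with basis x, y, z and bilinear multiplication whose only nonzero products of basis elements are z·x = y, z·y = y, and z·z = x (this makes B a Leibniz algebra). Then every t = c₁x + c₂y + c₃z with c₃ ≠ 0 and c₁ + c₂ + c₃ ≠ 0 satisfies that {t, t², t³} is linearly independent; in particular B is cyclic. -/

import Mathlib

/-- `lpow μ x k` is the left-normed power `x^(k+1)`; so `lpow μ x 0 = x`,
`lpow μ x 1 = x·x = x²`, `lpow μ x 2 = x·x² = x³`, etc. -/
def lpow {A : Type*} [AddCommGroup A] [Module ℂ A]
    (μ : A →ₗ[ℂ] A →ₗ[ℂ] A) (x : A) : ℕ → A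
  | 0 => x
  | n + 1 => μ x (lpow μ x n)
/-- The algebra B = ℂ³ with basis x = e₀, y = e₁, z = e₂ whose only nonzero products
of basis elements are z·x = y, z·y = y, z·z = x; thus u·v = u₂ • L_z(v) with
L_z(x) = y, L_z(y) = y, L_z(z) = x. -/
noncomputable def mulB : (Fin 3 → ℂ) →ₗ[ℂ] (Fin 3 → ℂ) →ₗ[ℂ] (Fin 3 → ℂ) :=
  (LinearMap.proj 2).smulRight (Matrix.mulVecLin !![0,0,1;1,1,0;0,0,0])

noncomputable def xB : Fin 3 → ℂ := ![1,0,0]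
noncomputable def yB : Fin 3 → ℂ := ![0,1,0]
noncomputable def zB : Fin 3 → ℂ := ![0,0,1]

lemma combo_eq (c₁ c₂ c₃ : ℂ) : c₁ • xB + c₂ • yB + c₃ • zB = ![c₁, c₂, c₃] := by
  funext i; fin_cases i <;> simp [xB, yB, zB]

lemma mulB_apply (c₁ c₂ c₃ : ℂ) (v : Fin 3 → ℂ) :
    mulB ![c₁,c₂,c₃] v = c₃ • ![v 2, v 0 + v 1, 0] := by
  simp [mulB, Matrix.mulVecLin, Matrix.mulVec, dotProduct, Fin.sum_univ_three,
    Matrix.vecHead, Matrix.vecTail]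

lemma lpow1_eq (c₁ c₂ c₃ : ℂ) :
    lpow mulB ![c₁,c₂,c₃] 1 = ![c₃ * c₃, c₃ * (c₁ + c₂), 0] := by
  show mulB ![c₁,c₂,c₃] ![c₁,c₂,c₃] = _
  rw [mulB_apply]
  funext i; fin_cases i <;> simp

lemma lpow2_eq (c₁ c₂ c₃ : ℂ) :
    lpow mulB ![c₁,c₂,c₃] 2 = ![0, c₃ * c₃ * (c₁ + c₂ + c₃), 0] := by
  show mulB ![c₁,c₂,c₃] (lpow mulB ![c₁,c₂,c₃] 1) = _
  rw [lpow1_eq, mulB_apply]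
  funext i; fin_cases i <;> simp <;> ring

lemma li_of (c₁ c₂ c₃ : ℂ) (h₃ : c₃ ≠ 0) (hs : c₁ + c₂ + c₃ ≠ 0) :
    LinearIndependent ℂ
      ![![c₁,c₂,c₃], lpow mulB ![c₁,c₂,c₃] 1, lpow mulB ![c₁,c₂,c₃] 2] := by
  rw [lpow1_eq, lpow2_eq]
  have : Matrix.row (!![c₁,c₂,c₃; c₃*c₃, c₃*(c₁+c₂), 0; 0, c₃*c₃*(c₁+c₂+c₃), 0] :
      Matrix (Fin 3) (Fin 3) ℂ) =
      ![![c₁,c₂,c₃], ![c₃*c₃, c₃*(c₁+c₂), 0], ![0, c₃*c₃*(c₁+c₂+c₃), 0]] := by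
    funext i; fin_cases i <;> rfl
  rw [← this, Matrix.linearIndependent_rows_iff_isUnit, Matrix.isUnit_iff_isUnit_det,
    isUnit_iff_ne_zero]
  have hdet : (!![c₁,c₂,c₃; c₃*c₃, c₃*(c₁+c₂), 0; 0, c₃*c₃*(c₁+c₂+c₃), 0] :
      Matrix (Fin 3) (Fin 3) ℂ).det = c₃ * (c₃ * (c₃ * (c₃ * (c₃ * (c₁ + c₂ + c₃))))) := by
    simp [Matrix.det_fin_three, Matrix.vecHead, Matrix.vecTail]; ring
  rw [hdet]
  intro h
  apply hs
  have h' : c₃ * (c₃ * (c₃ * (c₃ * (c₃ * (c₁ + c₂ + c₃))))) = 0 := by linear_combination h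
  rcases mul_eq_zero.1 h' with h0 | h' <;> [exact absurd h0 h₃; skip]
  rcases mul_eq_zero.1 h' with h0 | h' <;> [exact absurd h0 h₃; skip]
  rcases mul_eq_zero.1 h' with h0 | h' <;> [exact absurd h0 h₃; skip]
  rcases mul_eq_zero.1 h' with h0 | h' <;> [exact absurd h0 h₃; skip]
  rcases mul_eq_zero.1 h' with h0 | h' <;> [exact absurd h0 h₃; exact h']

/-- Every t = c₁x + c₂y + c₃z with c₃ ≠ 0 and c₁ + c₂ + c₃ ≠ 0 has
{t, t², t³} linearly independent; in particular B is cyclic. -/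
theorem algebraB_class7_cyclic :
    (∀ c₁ c₂ c₃ : ℂ, c₃ ≠ 0 → c₁ + c₂ + c₃ ≠ 0 →
      LinearIndependent ℂ
        ![c₁ • xB + c₂ • yB + c₃ • zB,
          lpow mulB (c₁ • xB + c₂ • yB + c₃ • zB) 1,
          lpow mulB (c₁ • xB + c₂ • yB + c₃ • zB) 2]) ∧
    (∃ t : Fin 3 → ℂ, ∃ e : Module.Basis (Fin 3) ℂ (Fin 3 → ℂ),
        ∀ i : Fin 3, e i = lpow mulB t (i : ℕ)) := by
  constructor
  · intro c₁ c₂ c₃ h₃ hs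
    rw [combo_eq]
    exact li_of c₁ c₂ c₃ h₃ hs
  · refine ⟨![1,0,1], ?_⟩
    have li := li_of 1 0 1 one_ne_zero (by norm_num)
    refine ⟨basisOfLinearIndependentOfCardEqFinrank li (by simp), fun i => ?_⟩
    rw [coe_basisOfLinearIndependentOfCardEqFinrank]
    fin_cases i <;> rfl
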